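/- arXiv:2207.02277 — 11 statements merged into one kernel-verified Lean document; each statement's English description precedes it below -/
import Mathlib

section
/- Let A and B be relational structures over a common signature σ, and let k ≥ 1. Then there is a homomorphism from A to B if and only if there is a homomorphism from the k-th tensor power A^⊗k to B^⊗k, where the k-th tensor power of a σ-structure A has domain A^k and, for each relation symbol R of arity r, its relation consists of all tensors a^⊗k for a ∈ R^A, where a^⊗k is the function [r]^k → A^k sending (i₁,…,i_k) to (a_{i₁},…,a_{i_k}). -/
/-- A relational signature: a type of symbols, each with an index type (its arity set). -/
structure Sig where
  symb : Type
  idx : symb → Type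

/-- A relational structure over a signature. -/
structure Str (σ : Sig) where
  dom : Type
  rel : ∀ R : σ.symb, Set (σ.idx R → dom)

/-- Homomorphisms of relational structures. -/
def IsHom {σ : Sig} (A B : Str σ) (f : A.dom → B.dom) : Prop :=
  ∀ (R : σ.symb) (t : σ.idx R → A.dom), t ∈ A.rel R → (fun i => f (t i)) ∈ B.rel R

/-- The tensorised signature: a symbol of arity `r` gets arity `r^k` (index type `ι → idx R`). -/
def tensSig (σ : Sig) (ι : Type) : Sig := ⟨σ.symb, fun R => ι → σ.idx R⟩

/-- The `k`-th tensor power of a structure (with `ι` playing the role of `[k]`):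
domain `A^k`, and relations consisting of the tensors `a^⊗k` for `a ∈ R^A`. -/
def tpow {σ : Sig} (A : Str σ) (ι : Type) : Str (tensSig σ ι) where
  dom := ι → A.dom
  rel R := { T | ∃ a ∈ A.rel R, T = fun i j => a (i j) }

/-- `A → B` iff `A^⊗k → B^⊗k`, for `k ≥ 1`. -/
theorem stmt0 {σ : Sig} (A B : Str σ) (k : ℕ) (hk : 1 ≤ k) :
    (∃ f, IsHom A B f) ↔ ∃ g, IsHom (tpow A (Fin k)) (tpow B (Fin k)) g := by
  constructor
  · rintro ⟨f, hf⟩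
    refine ⟨fun T i => f (T i), ?_⟩
    rintro R t ⟨a, ha, rfl⟩
    exact ⟨fun i => f (a i), hf R a ha, rfl⟩
  · rintro ⟨g, hg⟩
    haveI : NeZero k := ⟨by omega⟩
    refine ⟨fun a => g (fun _ => a) 0, ?_⟩
    intro R t ht
    obtain ⟨b, hb, heq⟩ := hg R (fun i j => t (i j)) ⟨t, ht, rfl⟩
    have : (fun i => g (fun _ => t i) 0) = b := by
      funext i₀
      have := congrFun heq (fun _ => i₀)
      simpa using congrFun this 0
    rw [this]; exact hb
end

section
/- Let A and B be relational structures over signature σ with A k-enhanced, i.e., σ contains a k-ary symbol R_k interpreted in A as the full relation A^k. Then the map sending a homomorphism f : A → B to the map f* : A^k → B^k defined coordinatewise, f*(a₁,…,a_k) = (f(a₁),…,f(a_k)), is a bijection between Hom(A,B) and Hom(A^⊗k, B^⊗k). -/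
/-- Coordinatewise application of a hom is a hom of tensor powers. -/
lemma star_isHom {σ : Sig} {A B : Str σ} (ι : Type) {f : A.dom → B.dom}
    (hf : IsHom A B f) :
    IsHom (tpow A ι) (tpow B ι) (fun v j => f (v j)) := by
  rintro R T ⟨a, ha, rfl⟩
  exact ⟨fun i => f (a i), hf R a ha, rfl⟩

/-- if `A` is `k`-enhanced (via a `k`-ary symbol `Rk` interpreted as the full
relation), then `f ↦ f*`, where `f*` acts coordinatewise, is a bijection
`Hom(A,B) ≃ Hom(A^⊗k, B^⊗k)`. -/
theorem stmt1 {σ : Sig} (A B : Str σ) (k : ℕ) (hk : 1 ≤ k) (Rk : σ.symb)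
    (he : Nonempty (σ.idx Rk ≃ Fin k)) (hA : A.rel Rk = Set.univ) :
    ∃ h : {f : A.dom → B.dom // IsHom A B f} →
        {g : (tpow A (σ.idx Rk)).dom → (tpow B (σ.idx Rk)).dom //
          IsHom (tpow A (σ.idx Rk)) (tpow B (σ.idx Rk)) g},
      Function.Bijective h ∧ ∀ f, (h f).1 = fun v j => f.1 (v j) := by
  obtain ⟨e⟩ := he
  have hne : Nonempty (σ.idx Rk) := ⟨e.symm ⟨0, hk⟩⟩
  obtain ⟨j₀⟩ := hne
  set ι := σ.idx Rk
  refine ⟨fun f => ⟨fun v j => f.1 (v j), star_isHom ι f.2⟩, ⟨?_, ?_⟩, fun f => rfl⟩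
  · rintro ⟨f, hf⟩ ⟨g, hg⟩ hfg
    have : ∀ x, f x = g x := by
      intro x
      have := congrArg (fun F => F (fun _ : ι => x) j₀) (Subtype.mk_eq_mk.mp hfg)
      simpa using this
    exact Subtype.ext (funext this)
  · rintro ⟨g, hg⟩
    -- key: g commutes with coordinatewise structure
    have key : ∀ v : ι → A.dom, ∀ j : ι,
        g v j = g (fun _ => v j) j₀ := by
      intro v j
      have hv : (fun (i : ι → ι) (j' : ι) => v (i j')) ∈ (tpow A ι).rel Rk := by
        exact ⟨v, by rw [hA]; trivial, rfl⟩
      obtain ⟨b, _, hb⟩ := hg Rk _ hv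
      have h1 := congrFun (congrFun hb (fun j' => j')) j
      have h2 := congrFun (congrFun hb (fun _ => j)) j₀
      simp only at h1 h2
      rw [h1, h2]
    refine ⟨⟨fun x => g (fun _ => x) j₀, ?_⟩, ?_⟩
    · intro R t ht
      have hT : (fun (i : ι → σ.idx R) (j : ι) => t (i j)) ∈ (tpow A ι).rel R :=
        ⟨t, ht, rfl⟩
      obtain ⟨b, hbB, hb⟩ := hg R _ hT
      have : (fun s => g (fun _ => t s) j₀) = b := by
        funext s
        have h2 := congrFun (congrFun hb (fun _ => s)) j₀
        simp only at h2
        rw [← key (fun _ => t s) j₀, h2]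
      rw [this]; exact hbB
    · apply Subtype.ext
      funext v j
      exact (key v j).symm
end

section
/- The collection S, where S^(L) is the set of real L × ℕ matrices M with finitely many nonzero columns, M Mᵀ diagonal, and trace(M Mᵀ) = 1, equipped with minor operations M_{/π} = P M for π : [L] → [L'] (where P is the L'×L 0/1 matrix with P_{i,j} = 1 iff π(j) = i), is a minion: M_{/id} = M and (M_{/π})_{/π'} = M_{/π'∘π}, and each minor operation maps S^(L) into S^(L'). -/
/-- The minor operation `M_{/π} = P M`, where `P` is the `L'×L` 0/1 matrix with
`P_{i,j} = 1` iff `π(j) = i`: the `i`-th row of `P M` is the sum of the rows of `M`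
indexed by the preimage `π⁻¹(i)`. -/
def minorS {L L' : ℕ} (π : Fin L → Fin L') (M : Fin L → ℕ → ℝ) : Fin L' → ℕ → ℝ :=
  fun i j => ∑ i' : Fin L, if π i' = i then M i' j else 0

/-- The SDP minion: real `L × ℕ` matrices with finitely many nonzero columns,
`M Mᵀ` diagonal (distinct rows orthogonal), and `trace (M Mᵀ) = 1`. -/
def Sminion (L : ℕ) : Set (Fin L → ℕ → ℝ) :=
  { M | {j | ∃ i, M i j ≠ 0}.Finite ∧
        (∀ i i' : Fin L, i ≠ i' → (∑ᶠ j : ℕ, M i j * M i' j) = 0) ∧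
        (∑ i : Fin L, ∑ᶠ j : ℕ, M i j * M i j) = 1 }

-- closure lemma
lemma minor_mem {L L' : ℕ} (π : Fin L → Fin L') (M : Fin L → ℕ → ℝ)
    (hM : M ∈ Sminion L) : minorS π M ∈ Sminion L' := by
  obtain ⟨hfin, horth, htr⟩ := hM
  set T : Finset ℕ := hfin.toFinset with hT
  have hmem : ∀ j i, M i j ≠ 0 → j ∈ T := by
    intro j i h
    simp [hT, Set.Finite.mem_toFinset]
    exact ⟨i, h⟩
  set S : Fin L → Fin L → ℝ := fun a b => ∑ j ∈ T, M a j * M b j with hSdef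
  have hSfin : ∀ a b : Fin L, (∑ᶠ j : ℕ, M a j * M b j) = S a b := by
    intro a b
    apply finsum_eq_finset_sum_of_support_subset
    intro j hj
    simp only [Function.mem_support] at hj
    exact hmem j a fun h => hj (by rw [h]; ring)
  have hS0 : ∀ a b : Fin L, a ≠ b → S a b = 0 := fun a b h => (hSfin a b).symm.trans (horth a b h)
  have hminorfin : ∀ i (j : ℕ), minorS π M i j ≠ 0 → j ∈ T := by
    intro i j h
    unfold minorS at h
    obtain ⟨a, -, ha⟩ := Finset.exists_ne_zero_of_sum_ne_zero h
    by_cases hπ : π a = i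
    · rw [if_pos hπ] at ha; exact hmem j a ha
    · rw [if_neg hπ] at ha; exact absurd rfl ha
  have key : ∀ i i' : Fin L', (∑ᶠ j : ℕ, minorS π M i j * minorS π M i' j)
      = ∑ a : Fin L, ∑ b : Fin L, if π a = i ∧ π b = i' then S a b else 0 := by
    intro i i'
    have h1 : (∑ᶠ j : ℕ, minorS π M i j * minorS π M i' j)
        = ∑ j ∈ T, minorS π M i j * minorS π M i' j := by
      apply finsum_eq_finset_sum_of_support_subset
      intro j hj
      simp only [Function.mem_support] at hj
      by_cases h : minorS π M i j = 0
      · exact absurd (by rw [h]; ring) hj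
      · exact hminorfin i j h
    rw [h1]
    unfold minorS
    have h2 : ∀ j ∈ T, (∑ a : Fin L, if π a = i then M a j else 0) *
        (∑ b : Fin L, if π b = i' then M b j else 0)
        = ∑ a : Fin L, ∑ b : Fin L,
            (if π a = i then M a j else 0) * (if π b = i' then M b j else 0) := by
      intro j _
      rw [Finset.sum_mul_sum]
    rw [Finset.sum_congr rfl h2, Finset.sum_comm]
    apply Finset.sum_congr rfl
    intro a _
    rw [Finset.sum_comm]
    apply Finset.sum_congr rfl
    intro b _
    by_cases h : π a = i ∧ π b = i'
    · rw [if_pos h]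
      simp only [hSdef, if_pos h.1, if_pos h.2]
    · rw [if_neg h]
      apply Finset.sum_eq_zero
      intro j _
      rcases not_and_or.mp h with h' | h'
      · rw [if_neg h', zero_mul]
      · rw [if_neg h', mul_zero]
  constructor
  · exact hfin.subset (by
      intro j hj
      obtain ⟨i, hi⟩ := hj
      have := hminorfin i j hi
      simpa [hT, Set.Finite.mem_toFinset] using this)
  constructor
  · intro i i' hii
    rw [key]
    apply Finset.sum_eq_zero; intro a _
    apply Finset.sum_eq_zero; intro b _
    split_ifs with h
    · exact hS0 a b (fun hab => hii (by rw [← h.1, ← h.2, hab]))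
    · rfl
  · have : ∀ i : Fin L', (∑ᶠ j : ℕ, minorS π M i j * minorS π M i j)
        = ∑ a : Fin L, ∑ b : Fin L, if π a = i ∧ π b = i then S a b else 0 := fun i => key i i
    rw [Finset.sum_congr rfl (fun i _ => this i)]
    rw [Finset.sum_comm]
    have h2 : ∀ a : Fin L, (∑ i : Fin L', ∑ b : Fin L, if π a = i ∧ π b = i then S a b else 0)
        = S a a := by
      intro a
      rw [Finset.sum_comm]
      rw [Finset.sum_eq_single a]
      · simp
      · intro b _ hba
        apply Finset.sum_eq_zero; intro i _
        split_ifs with h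
        · exact hS0 a b (Ne.symm hba)
        · rfl
      · simp
    rw [Finset.sum_congr rfl (fun a _ => h2 a)]
    rw [← htr]
    exact Finset.sum_congr rfl (fun a _ => (hSfin a a).symm)

lemma sminion_nonempty (L : ℕ) (hL : 1 ≤ L) : (Sminion L).Nonempty := by
  refine ⟨fun i j => if i = ⟨0, hL⟩ ∧ j = 0 then 1 else 0, ?_, ?_, ?_⟩
  · apply Set.Finite.subset (Set.finite_singleton 0)
    intro j hj
    obtain ⟨i, hi⟩ := hj
    by_cases h : i = ⟨0, hL⟩ ∧ j = 0
    · exact h.2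
    · exact absurd (if_neg h) hi
  · intro i i' hii
    apply finsum_eq_zero_of_forall_eq_zero
    intro j
    by_cases h : i = ⟨0, hL⟩ ∧ j = 0
    · have h' : ¬(i' = ⟨0, hL⟩ ∧ j = 0) := fun hc => hii (h.1.trans hc.1.symm)
      simp only [if_neg h', mul_zero]
    · simp only [if_neg h, zero_mul]
  · have key : ∀ i : Fin L, (∑ᶠ j : ℕ, (if i = ⟨0, hL⟩ ∧ j = 0 then (1:ℝ) else 0) *
        (if i = ⟨0, hL⟩ ∧ j = 0 then (1:ℝ) else 0)) = if i = ⟨0, hL⟩ then 1 else 0 := by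
      intro i
      rw [finsum_eq_single _ 0 (fun j hj => by rw [if_neg (fun hc => hj hc.2), zero_mul])]
      by_cases h : i = ⟨0, hL⟩
      · simp [h]
      · simp [h]
    rw [Finset.sum_congr rfl (fun i _ => key i)]
    simp

/-- `S` is a minion: each `S^(L)` (for `L ≥ 1`) is nonempty, the minor
operations map `S^(L)` into `S^(L')`, and they satisfy the identity and composition laws. -/
theorem stmt2 :
    (∀ L : ℕ, 1 ≤ L → (Sminion L).Nonempty) ∧
    (∀ (L L' : ℕ) (π : Fin L → Fin L') (M : Fin L → ℕ → ℝ),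
      M ∈ Sminion L → minorS π M ∈ Sminion L') ∧
    (∀ (L : ℕ) (M : Fin L → ℕ → ℝ), minorS id M = M) ∧
    (∀ (L L' L'' : ℕ) (π : Fin L → Fin L') (π' : Fin L' → Fin L'') (M : Fin L → ℕ → ℝ),
      minorS π' (minorS π M) = minorS (π' ∘ π) M) := by
  refine ⟨sminion_nonempty, fun L L' π M hM => minor_mem π M hM, ?_, ?_⟩
  · intro L M
    funext i j
    simp [minorS]
  · intro L L' L'' π π' M
    funext i j
    unfold minorS
    simp only [Function.comp_apply]
    have step : ∀ i' : Fin L', (if π' i' = i then ∑ a : Fin L, if π a = i' then M a j else 0 else 0)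
        = ∑ a : Fin L, if π' i' = i ∧ π a = i' then M a j else 0 := by
      intro i'
      split_ifs with h
      · apply Finset.sum_congr rfl
        intro a _
        by_cases h2 : π a = i' <;> simp [h, h2]
      · symm
        apply Finset.sum_eq_zero
        intro a _
        exact if_neg (fun hc => h hc.1)
    rw [Finset.sum_congr rfl (fun i' _ => step i'), Finset.sum_comm]
    apply Finset.sum_congr rfl
    intro a _
    rw [Finset.sum_eq_single (π a)]
    · by_cases h : π' (π a) = i <;> simp [h]
    · intro b _ hb
      exact if_neg (fun hc => hb hc.2.symm)
    · simp
end

section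
/- For any minion M, any k ≥ 1, and any k-enhanced σ-structures X, A: if there is a homomorphism X → A, then there is a homomorphism X^⊗k → F_M(A^⊗k). That is, the k-th level of the minion test is complete. -/
/-- An (abstract) minion: arity-indexed families of nonempty sets with minor operations
satisfying the identity and composition laws. -/
structure Minion where
  elem : Type → Type
  nonempty : ∀ I : Type, Nonempty (elem I)
  minor : ∀ {I J : Type}, (I → J) → elem I → elem J
  minor_id : ∀ {I : Type} (M : elem I), minor id M = M
  minor_comp : ∀ {I J K : Type} (π : I → J) (π' : J → K) (M : elem I),
    minor π' (minor π M) = minor (π' ∘ π) M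

/-- The free structure `F_𝕄(A)`: domain `𝕄^(|A|)`; a tuple is in `R^{F_𝕄(A)}` iff it
arises from a common element `Q ∈ 𝕄^(|R^A|)` via the minors along the coordinate
projections `π_i : R^A → A`. -/
def freeStr (𝕄 : Minion) {σ : Sig} (A : Str σ) : Str σ where
  dom := 𝕄.elem A.dom
  rel R := { t | ∃ Q : 𝕄.elem ↥(A.rel R), ∀ i : σ.idx R, t i = 𝕄.minor (fun a => a.1 i) Q }

/-- the `k`-th level of the minion test is complete: for any minion `𝕄`
and `k`-enhanced structures `X`, `A` (via a common `k`-ary symbol `Rk` interpreted as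
the full relation), if `X → A` then `X^⊗k → F_𝕄(A^⊗k)`. -/
theorem stmt8 (𝕄 : Minion) {σ : Sig} (k : ℕ) (hk : 1 ≤ k) (X A : Str σ)
    (Rk : σ.symb) (he : Nonempty (σ.idx Rk ≃ Fin k))
    (hX : X.rel Rk = Set.univ) (hA : A.rel Rk = Set.univ)
    (f : X.dom → A.dom) (hf : IsHom X A f) :
    ∃ g, IsHom (tpow X (σ.idx Rk)) (freeStr 𝕄 (tpow A (σ.idx Rk))) g := by
  obtain ⟨e⟩ := 𝕄.nonempty (σ.idx Rk)
  refine ⟨fun v => 𝕄.minor (fun _ => fun j => f (v j)) e, ?_⟩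
  rintro R t ⟨x, hx, rfl⟩
  refine ⟨𝕄.minor (fun _ => ⟨fun p j => f (x (p j)),
    ⟨fun j => f (x j), hf R x hx, rfl⟩⟩) e, fun i => ?_⟩
  rw [𝕄.minor_comp]
  rfl
end

section
/- Let M be a minion, k > p ≥ 1 integers, and X, A two σ-structures that are both k-enhanced and p-enhanced. If there is a homomorphism X^⊗k → F_M(A^⊗k), then there is a homomorphism X^⊗p → F_M(A^⊗p). Explicitly, choosing v ∈ [k]^p and w ∈ [p]^k with w∘v = id on [p], the map x ↦ ξ(x_w)_{/τ}, where τ : A^k → A^p sends a to a_v, is such a homomorphism. -/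
/-- lower levels of a hierarchy of minion tests are weaker: if `X`, `A`
are both `k`- and `p`-enhanced (`k > p ≥ 1`) and `X^⊗k → F_𝕄(A^⊗k)` via `ξ`, then
`X^⊗p → F_𝕄(A^⊗p)`; explicitly, for any `v ∈ [k]^p`, `w ∈ [p]^k` with `w ∘ v = id`,
the map `x ↦ ξ(x_w)_{/τ}` with `τ : a ↦ a_v` is such a homomorphism. -/
theorem stmt9 (𝕄 : Minion) {σ : Sig} (k p : ℕ) (hp : 1 ≤ p) (hkp : p < k)
    (X A : Str σ) (Rk Rp : σ.symb)
    (hek : Nonempty (σ.idx Rk ≃ Fin k)) (hep : Nonempty (σ.idx Rp ≃ Fin p))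
    (hXk : X.rel Rk = Set.univ) (hAk : A.rel Rk = Set.univ)
    (hXp : X.rel Rp = Set.univ) (hAp : A.rel Rp = Set.univ)
    (ξ : (tpow X (σ.idx Rk)).dom → (freeStr 𝕄 (tpow A (σ.idx Rk))).dom)
    (hξ : IsHom (tpow X (σ.idx Rk)) (freeStr 𝕄 (tpow A (σ.idx Rk))) ξ) :
    (∃ ζ, IsHom (tpow X (σ.idx Rp)) (freeStr 𝕄 (tpow A (σ.idx Rp))) ζ) ∧
    ∀ (v : σ.idx Rp → σ.idx Rk) (w : σ.idx Rk → σ.idx Rp), w ∘ v = id →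
      IsHom (tpow X (σ.idx Rp)) (freeStr 𝕄 (tpow A (σ.idx Rp)))
        (fun x => 𝕄.minor (fun a => a ∘ v) (ξ (x ∘ w))) := by
  have main : ∀ (v : σ.idx Rp → σ.idx Rk) (w : σ.idx Rk → σ.idx Rp), w ∘ v = id →
      IsHom (tpow X (σ.idx Rp)) (freeStr 𝕄 (tpow A (σ.idx Rp)))
        (fun x => 𝕄.minor (fun a => a ∘ v) (ξ (x ∘ w))) := by
    intro v w hwv R t ht
    obtain ⟨x, hx, hteq⟩ := ht
    -- the corresponding tuple in the k-th power
    have hs : (fun (i : σ.idx Rk → σ.idx R) (j : σ.idx Rk) => x (i j))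
        ∈ (tpow X (σ.idx Rk)).rel R := ⟨x, hx, rfl⟩
    obtain ⟨Q, hQ⟩ := hξ R _ hs
    -- map between relation witnesses
    refine ⟨𝕄.minor (fun T => ⟨fun i j => T.1 (i ∘ w) (v j), ?_⟩) Q, ?_⟩
    · obtain ⟨a, ha, hT⟩ := T.2
      exact ⟨a, ha, by
        funext i j
        simp only [hT]
        have : w (v j) = j := congrFun hwv j
        exact congrArg (fun m => a (i m)) this⟩
    · intro i
      subst hteq
      have key : ξ (fun j => x ((i ∘ w) j)) = 𝕄.minor (fun a => a.1 (i ∘ w)) Q := hQ (i ∘ w)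
      show 𝕄.minor (fun a => a ∘ v) (ξ fun j => x ((i ∘ w) j)) = _
      rw [key, 𝕄.minor_comp]
      exact (𝕄.minor_comp _ _ Q).trans rfl
  refine ⟨?_, main⟩
  obtain ⟨e⟩ := hek
  obtain ⟨f⟩ := hep
  set v : σ.idx Rp → σ.idx Rk := fun i => e.symm (Fin.castLE hkp.le (f i)) with hv
  set w : σ.idx Rk → σ.idx Rp := fun j =>
    f.symm (if h : (e j : ℕ) < p then ⟨e j, h⟩ else ⟨0, hp⟩) with hw
  have hwv : w ∘ v = id := by
    funext i
    simp only [hw, hv, Function.comp_apply, Equiv.apply_symm_apply, id_eq]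
    have hlt : ((Fin.castLE hkp.le (f i) : Fin k) : ℕ) < p := (f i).2
    rw [dif_pos hlt]
    simp [Fin.ext_iff]
  exact ⟨_, main v w hwv⟩
end

section
/- Let M be a linear minion over a semiring S of depth d, k ≥ 1, A a σ-structure, R ∈ σ of arity r, and suppose (M_i)_{i ∈ [r]^k} ∈ R^{F_M(A^⊗k)}, i.e., there is Q ∈ M^(|R^A|) with M_i = P_i Q for all i ∈ [r]^k. Then for any i ∈ [r]^k and a ∈ A^k with i ⊀ a (there exist α, β with i_α = i_β but a_α ≠ a_β), the a-th row of M_i is the zero vector of S^d. -/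
/-- Left multiplication of a matrix `M : I × d → S` by the 0/1 matrix of `π : I → J`:
the `j`-th row of the result is the sum of the rows of `M` over the preimage `π⁻¹(j)`. -/
noncomputable def pushMatrix {S : Type} [Semiring S] {I J d : Type}
    (π : I → J) (M : I → d → S) : J → d → S :=
  fun j c => ∑ᶠ (i : I) (_ : π i = j), M i c

/-- A linear minion over a semiring `S` with columns indexed by the depth type `d`:
a family of sets of `I × d` matrices, nonempty for nonempty finite `I`, closed under
the minor operations `M ↦ P M`. -/
structure LinMinion (S : Type) [Semiring S] (d : Type) where
  elem : ∀ I : Type, Set (I → d → S)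
  nonempty : ∀ I : Type, Nonempty I → Finite I → (elem I).Nonempty
  minor_mem : ∀ {I J : Type}, Finite I → ∀ (π : I → J) (M : I → d → S),
    M ∈ elem I → pushMatrix π M ∈ elem J

/-- The free structure of a linear minion generated by a structure `A`:
domain `𝕄^(|A|)`, and a tuple `t` is in `R^{F_𝕄(A)}` iff there is `Q ∈ 𝕄^(|R^A|)`
with `t i = P_i Q` for each coordinate `i`, where `P_i` has `(a,b)`-entry `1` iff `b_i = a`. -/
noncomputable def LinFree {S : Type} [Semiring S] {d : Type} (𝕄 : LinMinion S d)
    {σ : Sig} (A : Str σ) : Str σ where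
  dom := { M : A.dom → d → S // M ∈ 𝕄.elem A.dom }
  rel R := { t | ∃ Q : ↥(A.rel R) → d → S, Q ∈ 𝕄.elem ↥(A.rel R) ∧
      ∀ i : σ.idx R, (t i).1 = fun a c => ∑ᶠ (b : ↥(A.rel R)) (_ : b.1 i = a), Q b c }

/-- Conicity for a family of matrix sets: every element (over a nonempty finite index
type) is nonzero, and any subset of its rows summing to zero consists of zero rows. -/
def ConicFam {S : Type} [Semiring S] {d : Type} (E : ∀ I : Type, Set (I → d → S)) : Prop :=
  ∀ I : Type, Finite I → Nonempty I → ∀ M ∈ E I,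
    M ≠ 0 ∧ ∀ V : Set I, (∑ᶠ i ∈ V, M i) = 0 → ∀ i ∈ V, M i = 0

/-- if `(M_i)_{i ∈ [r]^k} ∈ R^{F_𝕄(A^⊗k)}` via a witness `Q ∈ 𝕄^(|R^A|)`
(i.e. `M_i = P_i Q` for all `i`), then for any `i ∈ [r]^k` and `a ∈ A^k` with `i ⊀ a`,
the `a`-th row of `M_i` is zero. -/
theorem stmt11 {S d : Type} [Semiring S] {σ : Sig} (𝕄 : LinMinion S d)
    {k : ℕ} (hk : 1 ≤ k) (A : Str σ) [Finite A.dom] (R : σ.symb)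
    (M : (Fin k → σ.idx R) → (Fin k → A.dom) → d → S)
    (Q : ↥(A.rel R) → d → S) (hQ : Q ∈ 𝕄.elem ↥(A.rel R))
    (hMQ : ∀ (i : Fin k → σ.idx R) (a : Fin k → A.dom) (c : d),
      M i a c = ∑ᶠ (b : ↥(A.rel R)) (_ : (fun j => b.1 (i j)) = a), Q b c) :
    ∀ (i : Fin k → σ.idx R) (a : Fin k → A.dom),
      (¬ ∀ α β : Fin k, i α = i β → a α = a β) → M i a = 0 := by
  intro i a h
  push_neg at h
  obtain ⟨α, β, hiab, hab⟩ := h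
  funext c
  rw [hMQ]
  have : ∀ b : ↥(A.rel R), (fun j => b.1 (i j)) ≠ a := by
    intro b hb
    apply hab
    rw [← congrFun hb α, ← congrFun hb β, hiab]
  simp only [Pi.zero_apply]
  rw [finsum_eq_zero_of_forall_eq_zero]
  intro b
  haveI : IsEmpty ((fun j => b.1 (i j)) = a) := ⟨this b⟩
  exact finsum_of_isEmpty _
end

section
/- Let M be a linear minion of depth d over a semiring, k ≥ 1, and X, A k-enhanced σ-structures. If ξ : X^⊗k → F_M(A^⊗k) is a homomorphism, then for any x ∈ X^k and a ∈ A^k with x ⊀ a, the a-th row of ξ(x) is the zero vector of length d. -/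
/-- if `𝕄` is a linear minion, `X`, `A` are `k`-enhanced, and
`ξ : X^⊗k → F_𝕄(A^⊗k)` is a homomorphism, then for any `x ∈ X^k` and `a ∈ A^k`
with `x ⊀ a`, the `a`-th row of `ξ(x)` is zero. -/
theorem stmt12 {S d : Type} [Semiring S] {σ : Sig} (𝕄 : LinMinion S d)
    {k : ℕ} (hk : 1 ≤ k) (X A : Str σ) [Finite X.dom] [Finite A.dom]
    (Rk : σ.symb) (he : Nonempty (σ.idx Rk ≃ Fin k))
    (hX : X.rel Rk = Set.univ) (hA : A.rel Rk = Set.univ)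
    (ξ : (tpow X (σ.idx Rk)).dom → (LinFree 𝕄 (tpow A (σ.idx Rk))).dom)
    (hξ : IsHom (tpow X (σ.idx Rk)) (LinFree 𝕄 (tpow A (σ.idx Rk))) ξ) :
    ∀ (x : σ.idx Rk → X.dom) (a : σ.idx Rk → A.dom),
      (¬ ∀ α β : σ.idx Rk, x α = x β → a α = a β) → (ξ x).1 a = 0 := by
  classical
  intro x a hxa
  push_neg at hxa
  obtain ⟨α, β, hxx, haa⟩ := hxa
  -- the tuple `f ↦ x ∘ f` lies in the relation of `X^⊗k`
  have ht : (fun f : σ.idx Rk → σ.idx Rk => fun j => x (f j)) ∈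
      (tpow X (σ.idx Rk)).rel Rk := ⟨x, by rw [hX]; trivial, rfl⟩
  obtain ⟨Q, -, hQ⟩ := hξ Rk _ ht
  -- the collapsing map
  set g : σ.idx Rk → σ.idx Rk := fun γ => if γ = β then α else γ with hg
  have hxg : (fun j => x (g j)) = x := by
    funext j
    by_cases hj : j = β <;> simp [hg, hj, hxx]
  have key := hQ g
  beta_reduce at key
  rw [hxg] at key
  have : (ξ x).1 a = fun c => ∑ᶠ (b : ↥((tpow A (σ.idx Rk)).rel Rk))
      (_ : b.1 g = a), Q b c := by rw [key]
  rw [this]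
  funext c
  refine finsum_eq_zero_of_forall_eq_zero (fun b => ?_)
  have hb : ¬ b.1 g = a := by
    intro hbg
    obtain ⟨a', -, ha'⟩ := b.2
    have hβ : a' (g β) = a β := by rw [← hbg]; rw [ha']
    have hα : a' (g α) = a α := by rw [← hbg]; rw [ha']
    have hgβ : g β = α := by simp [hg]
    have hgα : g α = α := by
      by_cases hαβ : α = β
      · simp [hg, hαβ]
      · simp [hg, hαβ]
    rw [hgβ] at hβ
    rw [hgα] at hα
    exact haa (hα ▸ hβ)
  haveI : IsEmpty (b.1 g = a) := ⟨hb⟩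
  exact finsum_of_isEmpty _
end

section
/- Let M be a linear minion over semiring S, k ≥ 1, X and A two k-enhanced σ-structures, and ξ : X^k → M^(n^k) a map (n = |A|). Then ξ preserves the relation R_k (i.e., (ξ(x_i))_{i∈[k]^k} ∈ R_k^{F_M(A^⊗k)} for all x ∈ X^k) if and only if for every x ∈ X^k and every i ∈ [k]^k, ξ(x_i) = Π_i ξ(x), where Π_i is the A^k × A^k matrix over S with (a, a')-entry equal to 1 if a'_i = a and 0 otherwise. -/
/-- Finsum over a condition satisfied by a unique element. -/
lemma finsum_cond_unique {M : Type} [AddCommMonoid M] {α : Type} (p : α → Prop) (f : α → M)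
    (a0 : α) (h0 : p a0) (hu : ∀ a, p a → a = a0) :
    (∑ᶠ (a : α) (_ : p a), f a) = f a0 := by
  classical
  have h1 : ∀ a : α, (∑ᶠ _ : p a, f a) = if p a then f a else 0 := fun a => finsum_eq_if
  rw [finsum_congr h1, finsum_eq_single _ a0 ?_, if_pos h0]
  intro a ha
  exact if_neg fun hp => ha (hu a hp)

/-- a map `ξ : X^k → 𝕄^(n^k)` preserves the enhancing relation `R_k`
(i.e. `(ξ(x_i))_{i ∈ [k]^k} ∈ R_k^{F_𝕄(A^⊗k)}` for all `x ∈ X^k`) iff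
`ξ(x_i) = Π_i ξ(x)` for all `x ∈ X^k` and `i ∈ [k]^k`, where `Π_i` has
`(a,a')`-entry `1` iff `a'_i = a`. -/
theorem stmt13 {S d : Type} [Semiring S] {σ : Sig} (𝕄 : LinMinion S d)
    {k : ℕ} (hk : 1 ≤ k) (X A : Str σ) [Finite X.dom] [Finite A.dom] [Nonempty A.dom]
    (Rk : σ.symb) (he : Nonempty (σ.idx Rk ≃ Fin k))
    (hX : X.rel Rk = Set.univ) (hA : A.rel Rk = Set.univ)
    (ξ : (tpow X (σ.idx Rk)).dom → (LinFree 𝕄 (tpow A (σ.idx Rk))).dom) :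
    (∀ T ∈ (tpow X (σ.idx Rk)).rel Rk,
        (fun i => ξ (T i)) ∈ (LinFree 𝕄 (tpow A (σ.idx Rk))).rel Rk)
      ↔
    (∀ (x : σ.idx Rk → X.dom) (i : σ.idx Rk → σ.idx Rk),
        (ξ (x ∘ i)).1 = fun a c =>
          ∑ᶠ (a' : σ.idx Rk → A.dom) (_ : a' ∘ i = a), (ξ x).1 a' c) := by
  classical
  obtain ⟨eqv⟩ := he
  let ι := σ.idx Rk
  have hιfin : Finite ι := Finite.of_equiv _ eqv.symm
  have hιne : Nonempty ι := ⟨eqv.symm ⟨0, hk⟩⟩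
  -- the canonical bijection between `ι → A.dom` and the relation `R_k^{A^⊗k}`
  let e : (ι → A.dom) → ↥((tpow A ι).rel Rk) := fun a =>
    ⟨fun i j => a (i j), ⟨a, by rw [hA]; trivial, rfl⟩⟩
  have hsurj : ∀ b : ↥((tpow A ι).rel Rk), e (b.1 id) = b := by
    rintro ⟨T, a0, -, rfl⟩
    rfl
  have hbij : Function.Bijective e := by
    constructor
    · intro a a' hee
      have := congrArg (fun b => b.1 id) hee
      exact this
    · intro b
      exact ⟨b.1 id, hsurj b⟩
  -- change of variables for sums over the relation
  have key : ∀ (Q : ↥((tpow A ι).rel Rk) → d → S) (i : ι → ι) (a : ι → A.dom) (c : d),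
      (∑ᶠ (b : ↥((tpow A ι).rel Rk)) (_ : b.1 i = a), Q b c)
        = ∑ᶠ (a' : ι → A.dom) (_ : a' ∘ i = a), Q (e a') c := by
    intro Q i a c
    exact (finsum_comp (g := fun b : ↥((tpow A ι).rel Rk) => ∑ᶠ _ : b.1 i = a, Q b c)
      e hbij).symm
  constructor
  · intro hp x i
    have hT : (fun i : ι → ι => x ∘ i) ∈ (tpow X ι).rel Rk :=
      ⟨x, by rw [hX]; trivial, rfl⟩
    obtain ⟨Q, -, hQi⟩ := hp _ hT
    have hid : (ξ (x ∘ id)).1 = fun a c =>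
        ∑ᶠ (b : ↥((tpow A ι).rel Rk)) (_ : b.1 id = a), Q b c := hQi id
    have hξx : ∀ (a : ι → A.dom) (c : d), (ξ x).1 a c = Q (e a) c := by
      intro a c
      have h2 : (ξ x).1 a c
          = ∑ᶠ (b : ↥((tpow A ι).rel Rk)) (_ : b.1 id = a), Q b c :=
        congrFun (congrFun hid a) c
      rw [h2]
      refine finsum_cond_unique _ _ (e a) rfl ?_
      intro b hb
      rw [← hsurj b, hb]
    have hi : (ξ (x ∘ i)).1 = fun a c =>
        ∑ᶠ (b : ↥((tpow A ι).rel Rk)) (_ : b.1 i = a), Q b c := hQi i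
    funext a c
    rw [congrFun (congrFun hi a) c, key Q i a c]
    refine finsum_congr fun a' => ?_
    refine finsum_congr fun _ => ?_
    exact (hξx a' c).symm
  · intro h T hT
    obtain ⟨x, -, rfl⟩ := hT
    refine ⟨fun b => (ξ x).1 (b.1 id), ?_, ?_⟩
    · have hmem := 𝕄.minor_mem (inferInstance : Finite (ι → A.dom)) e (ξ x).1 (ξ x).2
      have heq : pushMatrix e (ξ x).1 = fun b => (ξ x).1 (b.1 id) := by
        funext b c
        refine finsum_cond_unique _ _ (b.1 id) (hsurj b) ?_
        intro a ha
        have := congrArg (fun b' : ↥((tpow A ι).rel Rk) => b'.1 id) ha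
        exact this
      rwa [heq] at hmem
    · intro i
      have hxi : (ξ (x ∘ i)).1 = fun a c =>
          ∑ᶠ (a' : ι → A.dom) (_ : a' ∘ i = a), (ξ x).1 a' c := h x i
      funext a c
      rw [key (fun b => (ξ x).1 (b.1 id)) i a c]
      exact congrFun (congrFun hxi a) c
end

section
/- Let M be a conic minion of depth d over semiring S and N a linear minion of depth d' over the same semiring. Define (M ⋉ N)^(L) to be the set of L × (d+d') matrices [M | N] with M ∈ M^(L), N ∈ N^(L), and such that row i of N is zero whenever row i of M is zero. Then M ⋉ N, with minors given by left multiplication by the 0/1 matrices of functions π, is a conic minion of depth d + d'. -/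
/-- The semi-direct product family: block matrices `[M | N]` with `M ∈ 𝕄`, `N ∈ 𝕹`,
such that every zero row of `M` forces the corresponding row of `N` to be zero. -/
def semidir {S : Type} [Semiring S] {d d' : Type}
    (𝕄 : LinMinion S d) (𝕹 : LinMinion S d') : ∀ I : Type, Set (I → (d ⊕ d') → S) :=
  fun I => { W | ∃ M ∈ 𝕄.elem I, ∃ N ∈ 𝕹.elem I,
    W = (fun i => Sum.elim (M i) (N i)) ∧ ∀ i : I, M i = 0 → N i = 0 }
open Classical in
lemma fs_if_apply {p : Prop} {α β : Type} [AddCommMonoid β] (f : α → β) (a : α) :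
    (∑ᶠ (_ : p), f) a = ∑ᶠ (_ : p), f a := by
  rw [finsum_eq_if, finsum_eq_if]
  split <;> simp

lemma fs_apply {I α β : Type} [Finite I] [AddCommMonoid β] (f : I → α → β) (a : α) :
    (∑ᶠ i, f i) a = ∑ᶠ i, f i a := by
  cases nonempty_fintype I
  simp [finsum_eq_sum_of_fintype, Finset.sum_apply]

lemma fs_mem_apply {I α β : Type} [Finite I] [AddCommMonoid β] (V : Set I)
    (f : I → α → β) (a : α) : (∑ᶠ i ∈ V, f i) a = ∑ᶠ i ∈ V, f i a := by
  rw [fs_apply]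
  exact finsum_congr fun i => fs_if_apply _ _

/-- If the `j`-th row of the minor `P M` is zero, conicity forces all rows of `M`
in the preimage of `j` to be zero. -/
lemma key {S : Type} [Semiring S] {d : Type} {𝕄 : LinMinion S d}
    (h𝕄 : ConicFam 𝕄.elem) {I J : Type} [Finite I] {π : I → J} {M : I → d → S}
    (hM : M ∈ 𝕄.elem I) {j : J} (h : pushMatrix π M j = 0) :
    ∀ i, π i = j → M i = 0 := by
  cases isEmpty_or_nonempty I with
  | inl hI => exact fun i => absurd (Nonempty.intro i) (by simpa using hI)
  | inr hI =>
    have hV : (∑ᶠ i ∈ {i | π i = j}, M i) = 0 := by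
      funext a
      rw [fs_mem_apply]
      exact congrFun h a
    exact fun i hi => (h𝕄 I ‹_› hI M hM).2 _ hV i hi

/-- If all rows of `N` in the preimage of `j` are zero, the `j`-th row of `P N` is zero. -/
lemma push_row_zero {S : Type} [Semiring S] {d : Type} {I J : Type}
    {π : I → J} {N : I → d → S} {j : J} (h : ∀ i, π i = j → N i = 0) :
    pushMatrix π N j = 0 := by
  classical
  funext c
  show (∑ᶠ (i : I) (_ : π i = j), N i c) = 0
  rw [finsum_eq_zero_of_forall_eq_zero]
  intro i
  rw [finsum_eq_if]
  split
  · simp [h i ‹_›]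
  · rfl

theorem stmt14' {S : Type} [Semiring S] {d d' : Type}
    (𝕄 : LinMinion S d) (𝕹 : LinMinion S d') (h𝕄 : ConicFam 𝕄.elem) :
    (∀ I : Type, Nonempty I → Finite I → (semidir 𝕄 𝕹 I).Nonempty) ∧
    (∀ (I J : Type), Finite I → ∀ (π : I → J) (W : I → (d ⊕ d') → S),
      W ∈ semidir 𝕄 𝕹 I → pushMatrix π W ∈ semidir 𝕄 𝕹 J) ∧
    ConicFam (semidir 𝕄 𝕹) := by
  classical
  have hpush : ∀ {I J : Type} (π : I → J) (M : I → d → S) (N : I → d' → S),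
      pushMatrix π (fun i => Sum.elim (M i) (N i)) =
        fun j => Sum.elim (pushMatrix π M j) (pushMatrix π N j) := by
    intro I J π M N
    funext j c
    cases c <;> rfl
  refine ⟨?_, ?_, ?_⟩
  · -- nonemptiness
    intro I hne hfin
    obtain ⟨M, hM⟩ := 𝕄.nonempty I hne hfin
    obtain ⟨N, hN⟩ := 𝕹.nonempty I hne hfin
    have hMne : M ≠ 0 := (h𝕄 I hfin hne M hM).1
    obtain ⟨i0, hi0⟩ := Function.ne_iff.mp hMne
    set π : I → I := fun i => if M i = 0 then i0 else i with hπ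
    refine ⟨fun i => Sum.elim (M i) (pushMatrix π N i), M, hM, pushMatrix π N,
      𝕹.minor_mem hfin π N hN, rfl, ?_⟩
    intro i hi
    refine push_row_zero ?_
    intro i' hi'
    exfalso
    by_cases h' : M i' = 0
    · have : i0 = i := by simpa [hπ, h'] using hi'
      exact hi0 (this ▸ hi)
    · have : i' = i := by simpa [hπ, h'] using hi'
      exact h' (this ▸ hi)
  · -- minor closure
    intro I J hfin π W hW
    obtain ⟨M, hM, N, hN, rfl, hzero⟩ := hW
    rw [hpush]
    refine ⟨pushMatrix π M, 𝕄.minor_mem hfin π M hM,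
      pushMatrix π N, 𝕹.minor_mem hfin π N hN, rfl, ?_⟩
    intro j hj
    exact push_row_zero fun i hi => hzero i (key h𝕄 hM hj i hi)
  · -- conicity
    intro I hfin hne W hW
    obtain ⟨M, hM, N, hN, rfl, hzero⟩ := hW
    obtain ⟨hMne, hMcon⟩ := h𝕄 I hfin hne M hM
    constructor
    · intro h0
      apply hMne
      funext i a
      exact congrFun (congrFun h0 i) (Sum.inl a)
    · intro V hV i hi
      have hVM : (∑ᶠ i ∈ V, M i) = 0 := by
        funext a
        rw [fs_mem_apply]
        have h1 := congrFun hV (Sum.inl a)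
        rw [fs_mem_apply] at h1
        exact h1
      have hMi : M i = 0 := hMcon V hVM i hi
      funext c
      cases c with
      | inl a => exact congrFun hMi a
      | inr b => exact congrFun (hzero i hMi) b

/-- if `𝕄` is conic and `𝕹` linear (over the same semiring), then the
semi-direct product `𝕄 ⋉ 𝕹` is a conic (linear) minion of depth `d + d'`:
its arity sets are nonempty, it is closed under the minor operations, and it is conic. -/
theorem stmt14 {S : Type} [Semiring S] {d d' : Type}
    (𝕄 : LinMinion S d) (𝕹 : LinMinion S d') (h𝕄 : ConicFam 𝕄.elem) :
    (∀ I : Type, Nonempty I → Finite I → (semidir 𝕄 𝕹 I).Nonempty) ∧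
    (∀ (I J : Type), Finite I → ∀ (π : I → J) (W : I → (d ⊕ d') → S),
      W ∈ semidir 𝕄 𝕹 I → pushMatrix π W ∈ semidir 𝕄 𝕹 J) ∧
    ConicFam (semidir 𝕄 𝕹) :=
  stmt14' 𝕄 𝕹 h𝕄
end

section
/- Let k ≥ 2, let M be a conic minion of depth d, let X, A be k-enhanced σ-structures, and let ξ : X^⊗k → F_M(A^⊗k) be a homomorphism. Let R ∈ σ of arity r, x ∈ R^X, a ∈ R^A with x ⊀ a, and let Q ∈ M^(|R^A|) satisfy P_i Q = ξ(x_i) for all i ∈ [r]^k. Then the a-th row of Q is the zero vector of length d. -/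
/-- for a conic minion `𝕄`, level `k ≥ 2`, a homomorphism
`ξ : X^⊗k → F_𝕄(A^⊗k)`, `x ∈ R^X`, `a ∈ R^A` with `x ⊀ a`, and a witness
`Q ∈ 𝕄^(|R^A|)` with `P_i Q = ξ(x_i)` for all `i ∈ [r]^k`, the `a`-th row of `Q` is zero. -/
theorem stmt15 {S d : Type} [Semiring S] {σ : Sig} (𝕄 : LinMinion S d)
    (hconic : ConicFam 𝕄.elem) {k : ℕ} (hk : 2 ≤ k)
    (X A : Str σ) [Finite X.dom] [Finite A.dom] [∀ R : σ.symb, Finite (σ.idx R)]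
    (Rk : σ.symb) (he : Nonempty (σ.idx Rk ≃ Fin k))
    (hX : X.rel Rk = Set.univ) (hA : A.rel Rk = Set.univ)
    (ξ : (tpow X (σ.idx Rk)).dom → (LinFree 𝕄 (tpow A (σ.idx Rk))).dom)
    (hξ : IsHom (tpow X (σ.idx Rk)) (LinFree 𝕄 (tpow A (σ.idx Rk))) ξ)
    (R : σ.symb) (x : σ.idx R → X.dom) (hx : x ∈ X.rel R)
    (a : σ.idx R → A.dom) (ha : a ∈ A.rel R)
    (hxa : ¬ ∀ α β : σ.idx R, x α = x β → a α = a β)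
    (Q : ↥(A.rel R) → d → S) (hQ : Q ∈ 𝕄.elem ↥(A.rel R))
    (hPQ : ∀ i : σ.idx Rk → σ.idx R,
      (ξ (fun j => x (i j))).1 = fun b c =>
        ∑ᶠ (a' : ↥(A.rel R)) (_ : (fun j => a'.1 (i j)) = b), Q a' c) :
    Q ⟨a, ha⟩ = 0 := by
  classical
  push_neg at hxa
  obtain ⟨α, β, hxe, hne⟩ := hxa
  obtain ⟨e⟩ := he
  have hF : Finite ↥(A.rel R) := Subtype.finite
  have := Fintype.ofFinite ↥(A.rel R)
  have hki : (⟨0, by omega⟩ : Fin k) ≠ (⟨1, by omega⟩ : Fin k) := by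
    simp [Fin.ext_iff]
  set p : σ.idx Rk := e.symm ⟨0, by omega⟩ with hp
  set q : σ.idx Rk := e.symm ⟨1, by omega⟩ with hq
  have hpq : p ≠ q := fun h => hki (e.symm.injective h)
  -- the two index tuples agree after composing with x
  have h1 := hPQ (fun j => if j = q then β else α)
  have h2 := hPQ (fun _ => α)
  have hxx : (fun j => x (if j = q then β else α)) = (fun _ : σ.idx Rk => x α) := by
    funext j; split <;> simp [hxe]
  rw [hxx] at h1
  have key : (fun (b : σ.idx Rk → A.dom) c =>
      ∑ᶠ (a' : ↥(A.rel R)) (_ : (fun j => a'.1 (if j = q then β else α)) = b), Q a' c)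
      = fun b c =>
      ∑ᶠ (a' : ↥(A.rel R)) (_ : (fun _ : σ.idx Rk => a'.1 α) = b), Q a' c :=
    h1.symm.trans h2
  -- evaluate at the non-constant row b
  set b : σ.idx Rk → A.dom := fun j => if j = q then a β else a α with hb
  set V : Set ↥(A.rel R) := {a' | a'.1 α = a α ∧ a'.1 β = a β} with hV
  have hmem : ∀ a' : ↥(A.rel R), ((fun j => a'.1 (if j = q then β else α)) = b) ↔ a' ∈ V := by
    intro a'
    constructor
    · intro h
      constructor
      · have := congrFun h p
        simpa [hb, if_neg hpq] using this
      · have := congrFun h q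
        simpa [hb] using this
    · rintro ⟨h1, h2⟩
      funext j
      simp only [hb]
      split <;> assumption
  have hsum : ∀ c, ∑ᶠ (a' : ↥(A.rel R)) (_ : a' ∈ V), Q a' c = 0 := by
    intro c
    have hkey := congrFun (congrFun key b) c
    have hL : ∑ᶠ (a' : ↥(A.rel R)) (_ : (fun j => a'.1 (if j = q then β else α)) = b), Q a' c
        = ∑ᶠ (a' : ↥(A.rel R)) (_ : a' ∈ V), Q a' c := by
      apply finsum_congr; intro a'
      rw [finsum_eq_if, finsum_eq_if, if_congr (hmem a') rfl rfl]
    have hR : ∑ᶠ (a' : ↥(A.rel R)) (_ : (fun _ : σ.idx Rk => a'.1 α) = b), Q a' c = 0 := by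
      apply finsum_eq_zero_of_forall_eq_zero; intro a'
      rw [finsum_eq_if, if_neg, ]
      intro h
      have hcp := congrFun h p
      have hcq := congrFun h q
      simp only [hb, if_neg hpq, if_pos rfl] at hcp hcq
      exact hne (hcp.symm.trans hcq)
    rw [← hL, hkey, hR]
  have hsum' : (∑ᶠ a' ∈ V, Q a') = 0 := by
    funext c
    have : (∑ᶠ a' ∈ V, Q a') c = ∑ᶠ (a' : ↥(A.rel R)) (_ : a' ∈ V), Q a' c := by
      rw [finsum_mem_def, finsum_eq_sum_of_fintype]
      rw [Finset.sum_apply]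
      rw [finsum_eq_sum_of_fintype]
      apply Finset.sum_congr rfl
      intro a' _
      rw [finsum_eq_if]
      by_cases h : a' ∈ V <;> simp [Set.indicator, h]
    rw [this, hsum c]; rfl
  exact (hconic ↥(A.rel R) hF ⟨⟨a, ha⟩⟩ Q hQ).2 V hsum' ⟨a, ha⟩ ⟨rfl, rfl⟩
end

section
/- Let M be a conic minion, k ≥ 2, and let X, A be k-enhanced σ-structures with |X| ≤ k. If there exists a homomorphism ξ : X^⊗k → F_M(A^⊗k), then there exists a homomorphism from X to A. Moreover, such a homomorphism can be obtained by choosing any a ∈ A^k with the a-th row of ξ(v) nonzero, where v ∈ X^k enumerates all elements of X (with repetition), and mapping x to the entry of a in a position where v equals x. -/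
private lemma finsum_mem_apply' {S d I : Type} [Semiring S] [Finite I] (f : I → d → S)
    (V : Set I) (c : d) : (∑ᶠ i ∈ V, f i) c = ∑ᶠ i ∈ V, f i c := by
  classical
  have := Fintype.ofFinite I
  rw [← Set.coe_toFinset V, finsum_mem_coe_finset, finsum_mem_coe_finset]
  simp [Finset.sum_apply]

/-- conic hierarchies are sound in the limit. If `𝕄` is conic, `k ≥ 2`,
`X`, `A` are `k`-enhanced with `|X| ≤ k`, and there is a homomorphism
`ξ : X^⊗k → F_𝕄(A^⊗k)`, then `X → A`. Moreover, picking any surjective enumeration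
`v ∈ X^k` of the elements of `X` and any `a ∈ A^k` whose row of `ξ(v)` is nonzero, any
map `f` with `f(v_j) = a_j` for all `j` is a homomorphism `X → A`. -/
theorem stmt16 {S d : Type} [Semiring S] {σ : Sig} (𝕄 : LinMinion S d)
    (hconic : ConicFam 𝕄.elem) {k : ℕ} (hk : 2 ≤ k)
    (X A : Str σ) [Finite X.dom] [Nonempty X.dom] [Finite A.dom] [Nonempty A.dom]
    [∀ R : σ.symb, Finite (σ.idx R)] [∀ R : σ.symb, Nonempty (σ.idx R)]
    (Rk : σ.symb) (he : Nonempty (σ.idx Rk ≃ Fin k))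
    (hX : X.rel Rk = Set.univ) (hA : A.rel Rk = Set.univ)
    (hcard : Nat.card X.dom ≤ k)
    (ξ : (tpow X (σ.idx Rk)).dom → (LinFree 𝕄 (tpow A (σ.idx Rk))).dom)
    (hξ : IsHom (tpow X (σ.idx Rk)) (LinFree 𝕄 (tpow A (σ.idx Rk))) ξ) :
    (∃ f : X.dom → A.dom, IsHom X A f) ∧
    ∀ v : σ.idx Rk → X.dom, Function.Surjective v →
      ∀ a : σ.idx Rk → A.dom, (ξ v).1 a ≠ 0 →
        ∀ f : X.dom → A.dom, (∀ j, f (v j) = a j) → IsHom X A f := by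
  classical
  haveI hdfin : Finite ((tpow A (σ.idx Rk)).dom) := by
    show Finite (σ.idx Rk → A.dom); infer_instance
  haveI hdne : Nonempty ((tpow A (σ.idx Rk)).dom) := by
    show Nonempty (σ.idx Rk → A.dom); infer_instance
  -- rows of an element of the minion over `V` summing to zero pointwise are all zero
  have hrows : ∀ (I : Type), Finite I → Nonempty I → ∀ M ∈ 𝕄.elem I, ∀ V : Set I,
      (∀ c, (∑ᶠ x ∈ V, M x c) = 0) → ∀ x ∈ V, M x = 0 := by
    intro I hI hne M hM V hsum x hx
    haveI := hI
    refine (hconic I hI hne M hM).2 V ?_ x hx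
    funext c
    rw [finsum_mem_apply']
    simpa using hsum c
  -- key identity (II): `ξ (w ∘ q)` is a push of `ξ w`
  have hII : ∀ (w : σ.idx Rk → X.dom) (q : σ.idx Rk → σ.idx Rk) (β : σ.idx Rk → A.dom) (c : d),
      (ξ (fun j => w (q j))).1 β c
        = ∑ᶠ α ∈ {α : σ.idx Rk → A.dom | (fun j => α (q j)) = β}, (ξ w).1 α c := by
    intro w q β c
    have hT : (fun (i : σ.idx Rk → σ.idx Rk) (j : σ.idx Rk) => w (i j))
        ∈ (tpow X (σ.idx Rk)).rel Rk := ⟨w, by rw [hX]; trivial, rfl⟩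
    obtain ⟨Q, hQmem, hQ⟩ := hξ Rk _ hT
    have hmem : ∀ α : σ.idx Rk → A.dom,
        (fun (i : σ.idx Rk → σ.idx Rk) (j : σ.idx Rk) => α (i j))
          ∈ (tpow A (σ.idx Rk)).rel Rk := fun α => ⟨α, by rw [hA]; trivial, rfl⟩
    let e : (σ.idx Rk → A.dom) → ↥((tpow A (σ.idx Rk)).rel Rk) := fun α => ⟨_, hmem α⟩
    have hcomp : ∀ (b : ↥((tpow A (σ.idx Rk)).rel Rk)) (i : σ.idx Rk → σ.idx Rk),
        b.1 i = fun j => b.1 id (i j) := by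
      intro b i
      obtain ⟨s, -, hs⟩ := b.2
      have h2 : b.1 id = s := congrFun hs id
      rw [h2]
      exact congrFun hs i
    have hbe : ∀ b : ↥((tpow A (σ.idx Rk)).rel Rk), e (b.1 id) = b := by
      intro b
      apply Subtype.ext
      funext i
      exact (hcomp b i).symm
    have heinj : Function.Injective e := by
      intro α α' h
      exact congrArg (fun b : ↥((tpow A (σ.idx Rk)).rel Rk) => b.1 id) h
    have hset : {b : ↥((tpow A (σ.idx Rk)).rel Rk) | b.1 q = β}
        = e '' {α : σ.idx Rk → A.dom | (fun j => α (q j)) = β} := by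
      ext b
      constructor
      · intro hb
        exact ⟨b.1 id, (hcomp b q).symm.trans hb, hbe b⟩
      · rintro ⟨α, hα, rfl⟩
        exact hα
    have hQe : ∀ α : σ.idx Rk → A.dom, Q (e α) c = (ξ w).1 α c := by
      intro α
      have h1 : (ξ w).1 α c
          = ∑ᶠ b ∈ {b : ↥((tpow A (σ.idx Rk)).rel Rk) | b.1 id = α}, Q b c :=
        congrFun (congrFun (hQ id) α) c
      have hs : {b : ↥((tpow A (σ.idx Rk)).rel Rk) | b.1 id = α} = {e α} := by
        ext b
        simp only [Set.mem_setOf_eq, Set.mem_singleton_iff]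
        constructor
        · intro h
          rw [← h]
          exact (hbe b).symm
        · intro h
          rw [h]
          exact rfl
      rw [h1, hs, finsum_mem_singleton]
    calc (ξ (fun j => w (q j))).1 β c
        = ∑ᶠ b ∈ {b : ↥((tpow A (σ.idx Rk)).rel Rk) | b.1 q = β}, Q b c :=
          congrFun (congrFun (hQ q) β) c
      _ = ∑ᶠ α ∈ {α : σ.idx Rk → A.dom | (fun j => α (q j)) = β}, Q (e α) c := by
          rw [hset]; exact finsum_mem_image heinj.injOn
      _ = ∑ᶠ α ∈ {α : σ.idx Rk → A.dom | (fun j => α (q j)) = β}, (ξ w).1 α c :=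
          finsum_mem_congr rfl (fun α _ => hQe α)
  -- fibre-constancy: a nonzero row of `ξ w` is constant on the fibres of `w`
  have hfib : ∀ (w : σ.idx Rk → X.dom) (β : σ.idx Rk → A.dom), (ξ w).1 β ≠ 0 →
      ∀ j₁ j₂, w j₁ = w j₂ → β j₁ = β j₂ := by
    intro w β hβ j₁ j₂ hw
    by_contra hne
    have hj : j₁ ≠ j₂ := fun h => hne (h ▸ rfl)
    set q : σ.idx Rk → σ.idx Rk := fun j => if j = j₂ then j₁ else j with hq
    have hwq : (fun j => w (q j)) = w := by
      funext j
      by_cases h : j = j₂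
      · simp only [hq, h, if_pos rfl]
        rw [hw]
      · simp only [hq, if_neg h]
    apply hβ
    funext c
    have h2 := hII w q β c
    rw [hwq] at h2
    have hempty : {α : σ.idx Rk → A.dom | (fun j => α (q j)) = β} = ∅ := by
      ext α
      simp only [Set.mem_setOf_eq, Set.mem_empty_iff_false, iff_false]
      intro hα
      have e1 : α (q j₁) = β j₁ := congrFun hα j₁
      have e2 : α (q j₂) = β j₂ := congrFun hα j₂
      have hq1 : q j₁ = j₁ := if_neg hj
      have hq2 : q j₂ = j₁ := if_pos rfl
      rw [hq1] at e1
      rw [hq2] at e2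
      exact hne (e1.symm.trans e2)
    show (ξ w).1 β c = 0
    rw [h2, hempty, finsum_mem_empty]
  -- the main ("moreover") claim
  have key : ∀ v : σ.idx Rk → X.dom, Function.Surjective v →
      ∀ a : σ.idx Rk → A.dom, (ξ v).1 a ≠ 0 →
        ∀ f : X.dom → A.dom, (∀ j, f (v j) = a j) → IsHom X A f := by
    intro v hv a ha f hf R t ht
    have hv' : ∀ x, ∃ j, v j = x := hv
    choose g hg using hv'
    set p : σ.idx R → σ.idx Rk := fun r => g (t r) with hp
    have hvp : ∀ r, v (p r) = t r := fun r => hg (t r)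
    have hpfib : ∀ r₁ r₂, t r₁ = t r₂ → p r₁ = p r₂ := fun r₁ r₂ h => congrArg g h
    have hft : (fun r => f (t r)) = fun r => a (p r) := by
      funext r
      rw [← hvp r, hf (p r)]
    rw [hft]
    -- tensor certificate for `R`
    have hT : (fun (i : σ.idx Rk → σ.idx R) (j : σ.idx Rk) => t (i j))
        ∈ (tpow X (σ.idx Rk)).rel R := ⟨t, ht, rfl⟩
    obtain ⟨Q, hQmem, hQ⟩ := hξ R _ hT
    have hwit : ∀ b : ↥((tpow A (σ.idx Rk)).rel R), ∃ s ∈ A.rel R, b.1 = fun i j => s (i j) :=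
      fun b => b.2
    choose s hsrel hseq using hwit
    have hsb : ∀ (b : ↥((tpow A (σ.idx Rk)).rel R)) (i : σ.idx Rk → σ.idx R),
        b.1 i = fun j => s b (i j) := fun b i => congrFun (hseq b) i
    haveI hfun : Finite ((tensSig σ (σ.idx Rk)).idx R → (tpow A (σ.idx Rk)).dom) := by
      show Finite ((σ.idx Rk → σ.idx R) → (σ.idx Rk → A.dom)); infer_instance
    haveI hERfin : Finite ↥((tpow A (σ.idx Rk)).rel R) := Subtype.finite
    have hERne : Nonempty ↥((tpow A (σ.idx Rk)).rel R) := by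
      by_contra hnone
      haveI hempty : IsEmpty ↥((tpow A (σ.idx Rk)).rel R) := not_nonempty_iff.mp hnone
      set i₀ : σ.idx Rk → σ.idx R := fun _ => Classical.arbitrary _ with hi₀
      have h0 : (ξ (fun j => t (i₀ j))).1 = fun (α : σ.idx Rk → A.dom) (c : d) =>
          ∑ᶠ (b : ↥((tpow A (σ.idx Rk)).rel R)) (_ : b.1 i₀ = α), Q b c := hQ i₀
      have hz : (ξ (fun j => t (i₀ j))).1 = 0 := by
        rw [h0]
        funext α c
        simp [finsum_of_isEmpty]
        rfl
      exact (hconic _ hdfin hdne _ (ξ (fun j => t (i₀ j))).2).1 hz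
    -- a map `istar` whose composition with `t` covers the range of `t`
    have histar : ∃ istar : σ.idx Rk → σ.idx R, ∀ r, ∃ j, t (istar j) = t r := by
      set u : σ.idx Rk → σ.idx R :=
        fun j => if h : ∃ r, t r = v j then h.choose else Classical.arbitrary _ with hu
      refine ⟨u, fun r => ?_⟩
      have hex : ∃ r', t r' = v (g (t r)) := ⟨r, (hg (t r)).symm⟩
      have hu2 : u (g (t r)) = hex.choose := by rw [hu]; exact dif_pos hex
      exact ⟨g (t r), by rw [hu2, hex.choose_spec, hg (t r)]⟩
    obtain ⟨istar, histar⟩ := histar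
    -- the row `a ∘ p ∘ istar` of `ξ (t ∘ istar)` is nonzero
    have harg : (fun j => v (p (istar j))) = fun j => t (istar j) :=
      funext fun j => hvp (istar j)
    have hne1 : (ξ (fun j => t (istar j))).1 (fun j => a (p (istar j))) ≠ 0 := by
      intro hzero
      apply ha
      have hsum : ∀ c, (∑ᶠ α ∈ {α : σ.idx Rk → A.dom |
          (fun j => α (p (istar j))) = fun j => a (p (istar j))}, (ξ v).1 α c) = 0 := by
        intro c
        have h1 : (ξ (fun j => v (p (istar j)))).1 (fun j => a (p (istar j))) c
            = ∑ᶠ α ∈ {α : σ.idx Rk → A.dom |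
                (fun j => α (p (istar j))) = fun j => a (p (istar j))}, (ξ v).1 α c :=
          hII v (fun j => p (istar j)) (fun j => a (p (istar j))) c
        rw [harg] at h1
        rw [← h1, hzero]
        rfl
      exact hrows _ hdfin hdne (ξ v).1 (ξ v).2 _ hsum a rfl
    -- hence some row `b` of `Q` with `b.1 istar = a ∘ p ∘ istar` is nonzero
    have h2 : (ξ (fun j => t (istar j))).1 = fun (α : σ.idx Rk → A.dom) (c : d) =>
        ∑ᶠ b ∈ {b : ↥((tpow A (σ.idx Rk)).rel R) | b.1 istar = α}, Q b c := hQ istar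
    have hb : ∃ b : ↥((tpow A (σ.idx Rk)).rel R),
        b.1 istar = (fun j => a (p (istar j))) ∧ Q b ≠ 0 := by
      by_contra hno
      push_neg at hno
      apply hne1
      funext c
      rw [h2]
      exact finsum_mem_of_eqOn_zero fun b hbmem => congrFun (hno b hbmem) c
    obtain ⟨b, hbeq, hbQ⟩ := hb
    -- rows of `Q` that are nonzero are constant on fibres of `t` (uses `k ≥ 2`)
    obtain ⟨ek⟩ := he
    have hsfib : ∀ r₁ r₂, t r₁ = t r₂ → s b r₁ = s b r₂ := by
      intro r₁ r₂ htr
      by_contra hnes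
      obtain ⟨j₀, j₁, hjne⟩ : ∃ j₀ j₁ : σ.idx Rk, j₀ ≠ j₁ := by
        refine ⟨ek.symm ⟨0, by omega⟩, ek.symm ⟨1, by omega⟩, fun h => ?_⟩
        have := congrArg (fun z => (ek z).1) h
        simp at this
      set i : σ.idx Rk → σ.idx R := fun j => if j = j₀ then r₁ else r₂ with hi
      have hI1 : (fun j => v (p (i j))) = fun j => t (i j) := funext fun j => hvp (i j)
      have hColl : (ξ (fun j => t (i j))).1 (fun j => s b (i j)) = 0 := by
        funext c
        have h3 : (ξ (fun j => v (p (i j)))).1 (fun j => s b (i j)) c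
            = ∑ᶠ α ∈ {α : σ.idx Rk → A.dom |
                (fun j => α (p (i j))) = fun j => s b (i j)}, (ξ v).1 α c :=
          hII v (fun j => p (i j)) (fun j => s b (i j)) c
        rw [hI1] at h3
        have hemp : {α : σ.idx Rk → A.dom |
            (fun j => α (p (i j))) = fun j => s b (i j)} = ∅ := by
          ext α
          simp only [Set.mem_setOf_eq, Set.mem_empty_iff_false, iff_false]
          intro hα
          have e1 : α (p (i j₀)) = s b (i j₀) := congrFun hα j₀
          have e2 : α (p (i j₁)) = s b (i j₁) := congrFun hα j₁
          have hi0 : i j₀ = r₁ := if_pos rfl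
          have hi1 : i j₁ = r₂ := if_neg (Ne.symm hjne)
          rw [hi0] at e1
          rw [hi1] at e2
          rw [hpfib r₁ r₂ htr] at e1
          exact hnes (e1.symm.trans e2)
        show (ξ (fun j => t (i j))).1 (fun j => s b (i j)) c = 0
        rw [h3, hemp, finsum_mem_empty]
      have h4 : (ξ (fun j => t (i j))).1 = fun (α : σ.idx Rk → A.dom) (c : d) =>
          ∑ᶠ b' ∈ {b' : ↥((tpow A (σ.idx Rk)).rel R) | b'.1 i = α}, Q b' c := hQ i
      apply hbQ
      have hsum2 : ∀ c, (∑ᶠ b' ∈ {b' : ↥((tpow A (σ.idx Rk)).rel R) |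
          b'.1 i = fun j => s b (i j)}, Q b' c) = 0 := by
        intro c
        have h5 := congrFun (congrFun h4 (fun j => s b (i j))) c
        rw [← h5, hColl]
        rfl
      exact hrows _ hERfin hERne Q hQmem _ hsum2 b (hsb b i)
    -- conclude: `a ∘ p = s b ∈ A.rel R`
    have hfinal : (fun r => a (p r)) = s b := by
      funext r
      obtain ⟨j, hj⟩ := histar r
      have h6 : s b (istar j) = a (p (istar j)) :=
        congrFun ((hsb b istar).symm.trans hbeq) j
      calc a (p r) = a (p (istar j)) := by rw [hpfib _ _ hj]
        _ = s b (istar j) := h6.symm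
        _ = s b r := hsfib _ _ hj
    rw [hfinal]
    exact hsrel b
  refine ⟨?_, key⟩
  -- existence: build a surjective `v` and a compatible `f`
  obtain ⟨ek⟩ := he
  have hn1 : 1 ≤ Nat.card X.dom := Nat.card_pos
  let eX := Finite.equivFin X.dom
  set v : σ.idx Rk → X.dom :=
    fun j => eX.symm ⟨min (ek j).1 (Nat.card X.dom - 1), by omega⟩ with hv
  have hvsurj : Function.Surjective v := by
    intro x
    have hlt : (eX x).1 < Nat.card X.dom := (eX x).2
    refine ⟨ek.symm ⟨(eX x).1, by omega⟩, eX.injective ?_⟩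
    rw [hv]
    simp only [Equiv.apply_symm_apply]
    apply Fin.ext
    simp [Equiv.apply_symm_apply]
    omega
  have hMne : (ξ v).1 ≠ 0 := (hconic _ hdfin hdne _ (ξ v).2).1
  obtain ⟨a, ha⟩ := Function.ne_iff.mp hMne
  have ha' : (ξ v).1 a ≠ 0 := ha
  have hvs' : ∀ x, ∃ j, v j = x := hvsurj
  choose g hg using hvs'
  refine ⟨fun x => a (g x), key v hvsurj a ha' _ fun j => ?_⟩
  exact hfib v a ha' (g (v j)) j (hg (v j))
end
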